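/- Let B be a nondegenerate bilinear form on a 2n-dimensional complex vector space V which is either symmetric or alternating, and suppose V = V₋ ⊕ V₊ with both summands totally isotropic (hence of dimension n). Equip V with the ℂ*-action φ_t acting as t on V₋ and as the identity on V₊. Then for integers 0 ≤ s ≤ k ≤ n, the assignment W ↦ (W ∩ V₋, { v ∈ V₋ : B(v, w) = 0 for all w ∈ W ∩ V₊ }) is a bijection from the set of invariant totally isotropic subspaces W ⊆ V with dim W = k and dim(W ∩ V₊) = s onto the set of flags W' ⊆ A ⊆ V₋ with dim W' = k − s and dim A = n − s; the inverse sends (W', A) to W' ⊕ { w ∈ V₊ : B(v, w) = 0 for all v ∈ A }. (This identifies the fixed-point components of the ℂ*-action on the isotropic Grassmannian of k-planes with two-step flag varieties in V₋.) -/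

import Mathlib

open Module Submodule

section Helpers

variable {V : Type*} [AddCommGroup V] [Module ℂ V] [FiniteDimensional ℂ V]

set_option linter.unusedSectionVars false

/-- The pairing `P →ₗ Dual Q` induced by a bilinear form `C` on `V`. -/
noncomputable def pairAux (C : V →ₗ[ℂ] V →ₗ[ℂ] ℂ) (P Q : Submodule ℂ V) :
    P →ₗ[ℂ] Module.Dual ℂ Q :=
  ((C.comp P.subtype).flip.comp Q.subtype).flip

@[simp] lemma pairAux_apply (C : V →ₗ[ℂ] V →ₗ[ℂ] ℂ) (P Q : Submodule ℂ V)
    (x : P) (y : Q) : pairAux C P Q x y = C x y := rfl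

lemma pairAux_injective (C : V →ₗ[ℂ] V →ₗ[ℂ] ℂ)
    (hC : ∀ v : V, (∀ w : V, C v w = 0) → v = 0)
    (P Q : Submodule ℂ V) (hPQ : P ⊔ Q = ⊤)
    (hPP : ∀ u ∈ P, ∀ u' ∈ P, C u u' = 0) :
    Function.Injective (pairAux C P Q) := by
  rw [← LinearMap.ker_eq_bot, eq_bot_iff]
  intro x hx
  have hx0 : ∀ y ∈ Q, C x y = 0 := by
    intro y hy
    have : pairAux C P Q x = 0 := hx
    simpa using congrFun (congrArg DFunLike.coe this) ⟨y, hy⟩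
  have : (x : V) = 0 := by
    apply hC
    intro w
    have hw : w ∈ P ⊔ Q := by rw [hPQ]; trivial
    obtain ⟨p, hp, q, hq, rfl⟩ := Submodule.mem_sup.mp hw
    rw [map_add, hPP x x.2 p hp, hx0 q hq, add_zero]
  simpa [Submodule.mem_bot] using Subtype.ext this

lemma mem_orthAux (C : V →ₗ[ℂ] V →ₗ[ℂ] ℂ) (S : Submodule ℂ V) (v : V) :
    v ∈ (⨅ w ∈ S, LinearMap.ker (C.flip w)) ↔ ∀ w ∈ S, C v w = 0 := by
  simp [Submodule.mem_iInf]

lemma mem_orthAux' (C : V →ₗ[ℂ] V →ₗ[ℂ] ℂ) (A : Submodule ℂ V) (w : V) :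
    w ∈ (⨅ v ∈ A, LinearMap.ker (C v)) ↔ ∀ v ∈ A, C v w = 0 := by
  simp [Submodule.mem_iInf]

/-- Key dimension count: the orthogonal in `P` of a subspace `S ≤ Q`. -/
lemma key_finrank (C : V →ₗ[ℂ] V →ₗ[ℂ] ℂ)
    (hC : ∀ v : V, (∀ w : V, C v w = 0) → v = 0)
    (P Q : Submodule ℂ V) (hPQ : P ⊔ Q = ⊤)
    (hPP : ∀ u ∈ P, ∀ u' ∈ P, C u u' = 0)
    (hrk : finrank ℂ P = finrank ℂ Q)
    (S : Submodule ℂ V) (hS : S ≤ Q) :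
    finrank ℂ (P ⊓ ⨅ w ∈ S, LinearMap.ker (C.flip w) : Submodule ℂ V)
      = finrank ℂ P - finrank ℂ S := by
  classical
  set e := pairAux C P Q with he
  have he_inj := pairAux_injective C hC P Q hPQ hPP
  have he_surj : Function.Surjective e := by
    rw [← LinearMap.range_eq_top]
    apply Submodule.eq_top_of_finrank_eq
    have h1 := LinearMap.finrank_range_add_finrank_ker e
    rw [LinearMap.ker_eq_bot.mpr he_inj, finrank_bot, add_zero] at h1
    rw [h1, Subspace.dual_finrank_eq, hrk]
  set L := (Submodule.inclusion hS).dualMap.comp e with hL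
  have hL_surj : Function.Surjective L :=
    (LinearMap.dualMap_surjective_of_injective (Submodule.inclusion_injective hS)).comp he_surj
  have hmap : (P ⊓ ⨅ w ∈ S, LinearMap.ker (C.flip w)) = (LinearMap.ker L).map P.subtype := by
    ext v
    simp only [Submodule.mem_inf, mem_orthAux, Submodule.mem_map, LinearMap.mem_ker]
    constructor
    · rintro ⟨hvP, hv⟩
      refine ⟨⟨v, hvP⟩, ?_, rfl⟩
      ext ⟨w, hw⟩
      simpa [hL, he] using hv w hw
    · rintro ⟨⟨x, hxP⟩, hx, rfl⟩
      refine ⟨hxP, fun w hw => ?_⟩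
      simpa [hL, he] using congrFun (congrArg DFunLike.coe hx) ⟨w, hw⟩
  have h2 := LinearMap.finrank_range_add_finrank_ker L
  rw [LinearMap.range_eq_top.mpr hL_surj, finrank_top, Subspace.dual_finrank_eq] at h2
  have h3 : finrank ℂ ((LinearMap.ker L).map P.subtype) = finrank ℂ (LinearMap.ker L) :=
    Submodule.finrank_map_subtype_eq P _
  rw [hmap, h3]
  omega

lemma graded_of_invariant (Vm Vp : Submodule ℂ V) (hV : IsCompl Vm Vp)
    (φ : ℂˣ → V →ₗ[ℂ] V)
    (hφm : ∀ (t : ℂˣ) (v : V), v ∈ Vm → φ t v = (t : ℂ) • v)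
    (hφp : ∀ (t : ℂˣ) (v : V), v ∈ Vp → φ t v = v)
    (W : Submodule ℂ V) (hW : ∀ t : ℂˣ, W.map (φ t) ≤ W) :
    W = (W ⊓ Vm) ⊔ (W ⊓ Vp) := by
  refine le_antisymm ?_ (sup_le inf_le_left inf_le_left)
  intro w hw
  have hwT : w ∈ Vm ⊔ Vp := by rw [hV.sup_eq_top]; trivial
  obtain ⟨a, ha, b, hb, rfl⟩ := Submodule.mem_sup.mp hwT
  set t : ℂˣ := Units.mk0 2 two_ne_zero with ht
  have h2 : φ t (a + b) ∈ W := hW t ⟨a + b, hw, rfl⟩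
  have hval : φ t (a + b) = (2 : ℂ) • a + b := by
    rw [map_add, hφm t a ha, hφp t b hb, ht]; norm_num
  have haW : a ∈ W := by
    have : φ t (a + b) - (a + b) = a := by
      rw [hval]; rw [two_smul]; abel
    rw [← this]
    exact W.sub_mem h2 hw
  have hbW : b ∈ W := by
    have : (a + b) - a = b := by abel
    rw [← this]; exact W.sub_mem hw haW
  exact Submodule.mem_sup.mpr ⟨a, ⟨haW, ha⟩, b, ⟨hbW, hb⟩, rfl⟩

lemma sup_inf_eq_left (Vm Vp : Submodule ℂ V) (hV : IsCompl Vm Vp)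
    (Wm Wp : Submodule ℂ V) (hWm : Wm ≤ Vm) (hWp : Wp ≤ Vp) :
    (Wm ⊔ Wp) ⊓ Vm = Wm := by
  refine le_antisymm ?_ (le_inf le_sup_left hWm)
  rintro x ⟨hx, hxm⟩
  obtain ⟨a, ha, b, hb, rfl⟩ := Submodule.mem_sup.mp hx
  have hbmem : b ∈ Vm ⊓ Vp := ⟨by
    have : b = (a + b) - a := by abel
    rw [this]; exact Vm.sub_mem hxm (hWm ha), hWp hb⟩
  rw [hV.inf_eq_bot] at hbmem
  simp only [Submodule.mem_bot] at hbmem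
  subst hbmem
  simpa using ha

end Helpers

/-- Let `B` be a nondegenerate symmetric or alternating bilinear form on a
`2n`-dimensional complex vector space `V`, with `V = V₋ ⊕ V₊`, both summands totally
isotropic. Equip `V` with the `ℂ*`-action `φ t` acting as `t` on `V₋` and as the identity on
`V₊`. For `0 ≤ s ≤ k ≤ n`, the map
`W ↦ (W ∩ V₋, { v ∈ V₋ : B(v,w) = 0 ∀ w ∈ W ∩ V₊ })` is a bijection from the set of
invariant totally isotropic subspaces `W` with `dim W = k`, `dim (W ∩ V₊) = s` onto the set
of flags `W' ⊆ A ⊆ V₋` with `dim W' = k - s`, `dim A = n - s`; the inverse sends `(W', A)` to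
`W' ⊕ { w ∈ V₊ : B(v,w) = 0 ∀ v ∈ A }`. -/
theorem stmt_5 {V : Type*} [AddCommGroup V] [Module ℂ V] [FiniteDimensional ℂ V]
    (n : ℕ) (hdim : Module.finrank ℂ V = 2 * n)
    (B : V →ₗ[ℂ] V →ₗ[ℂ] ℂ)
    (hB : ∀ v : V, (∀ w : V, B v w = 0) → v = 0)
    (hBsa : (∀ x y, B x y = B y x) ∨ (∀ x, B x x = 0))
    (Vm Vp : Submodule ℂ V) (hV : IsCompl Vm Vp)
    (hm : ∀ u ∈ Vm, ∀ u' ∈ Vm, B u u' = 0)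
    (hp : ∀ u ∈ Vp, ∀ u' ∈ Vp, B u u' = 0)
    (φ : ℂˣ → V →ₗ[ℂ] V)
    (hφm : ∀ (t : ℂˣ) (v : V), v ∈ Vm → φ t v = (t : ℂ) • v)
    (hφp : ∀ (t : ℂˣ) (v : V), v ∈ Vp → φ t v = v)
    (k s : ℕ) (hs : s ≤ k) (hk : k ≤ n) :
    Set.BijOn
      (fun W : Submodule ℂ V =>
        (W ⊓ Vm, Vm ⊓ ⨅ w ∈ W ⊓ Vp, LinearMap.ker (B.flip w)))
      {W : Submodule ℂ V | (∀ t : ℂˣ, W.map (φ t) ≤ W) ∧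
        (∀ u ∈ W, ∀ u' ∈ W, B u u' = 0) ∧
        Module.finrank ℂ W = k ∧ Module.finrank ℂ (W ⊓ Vp : Submodule ℂ V) = s}
      {p : Submodule ℂ V × Submodule ℂ V | p.1 ≤ p.2 ∧ p.2 ≤ Vm ∧
        Module.finrank ℂ p.1 = k - s ∧ Module.finrank ℂ p.2 = n - s} ∧
    Set.InvOn
      (fun p : Submodule ℂ V × Submodule ℂ V =>
        p.1 ⊔ (Vp ⊓ ⨅ v ∈ p.2, LinearMap.ker (B v)))
      (fun W : Submodule ℂ V =>
        (W ⊓ Vm, Vm ⊓ ⨅ w ∈ W ⊓ Vp, LinearMap.ker (B.flip w)))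
      {W : Submodule ℂ V | (∀ t : ℂˣ, W.map (φ t) ≤ W) ∧
        (∀ u ∈ W, ∀ u' ∈ W, B u u' = 0) ∧
        Module.finrank ℂ W = k ∧ Module.finrank ℂ (W ⊓ Vp : Submodule ℂ V) = s}
      {p : Submodule ℂ V × Submodule ℂ V | p.1 ≤ p.2 ∧ p.2 ≤ Vm ∧
        Module.finrank ℂ p.1 = k - s ∧ Module.finrank ℂ p.2 = n - s} := by
  classical
  -- reflexivity of the form
  have hswap : ∀ x y : V, B x y = 0 → B y x = 0 := by
    rcases hBsa with h | h
    · intro x y hxy; rw [h]; exact hxy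
    · intro x y hxy
      have hxyxy := h (x + y)
      simp only [map_add, LinearMap.add_apply] at hxyxy
      rw [h x, h y, hxy] at hxyxy
      simpa using hxyxy
  have hBflip : ∀ v : V, (∀ w : V, B.flip v w = 0) → v = 0 := by
    intro v h
    exact hB v fun w => hswap w v (h w)
  have hpp' : ∀ u ∈ Vp, ∀ u' ∈ Vp, B.flip u u' = 0 := fun u hu u' hu' => hp u' hu' u hu
  -- dimensions of the two halves
  have hrm : finrank ℂ Vm ≤ finrank ℂ Vp := by
    have := LinearMap.finrank_le_finrank_of_injective
      (pairAux_injective B hB Vm Vp hV.sup_eq_top hm)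
    rwa [Subspace.dual_finrank_eq] at this
  have hrp : finrank ℂ Vp ≤ finrank ℂ Vm := by
    have := LinearMap.finrank_le_finrank_of_injective
      (pairAux_injective B.flip hBflip Vp Vm hV.symm.sup_eq_top hpp')
    rwa [Subspace.dual_finrank_eq] at this
  have hsum : finrank ℂ Vm + finrank ℂ Vp = 2 * n := by
    rw [Submodule.finrank_add_eq_of_isCompl hV, hdim]
  have hVm : finrank ℂ Vm = n := by omega
  have hVp : finrank ℂ Vp = n := by omega
  -- specialized dimension counts
  have keyA : ∀ S : Submodule ℂ V, S ≤ Vp →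
      finrank ℂ (Vm ⊓ ⨅ w ∈ S, LinearMap.ker (B.flip w) : Submodule ℂ V)
        = n - finrank ℂ S := by
    intro S hS
    rw [key_finrank B hB Vm Vp hV.sup_eq_top hm (by rw [hVm, hVp]) S hS, hVm]
  have keyA' : ∀ A : Submodule ℂ V, A ≤ Vm →
      finrank ℂ (Vp ⊓ ⨅ v ∈ A, LinearMap.ker (B v) : Submodule ℂ V)
        = n - finrank ℂ A := by
    intro A hA
    have h := key_finrank B.flip hBflip Vp Vm hV.symm.sup_eq_top hpp'
      (by rw [hVm, hVp]) A hA
    rw [LinearMap.flip_flip] at h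
    rw [h, hVp]
  -- forward mapsTo
  have hMapsF : Set.MapsTo
      (fun W : Submodule ℂ V =>
        (W ⊓ Vm, Vm ⊓ ⨅ w ∈ W ⊓ Vp, LinearMap.ker (B.flip w)))
      {W : Submodule ℂ V | (∀ t : ℂˣ, W.map (φ t) ≤ W) ∧
        (∀ u ∈ W, ∀ u' ∈ W, B u u' = 0) ∧
        Module.finrank ℂ W = k ∧ Module.finrank ℂ (W ⊓ Vp : Submodule ℂ V) = s}
      {p : Submodule ℂ V × Submodule ℂ V | p.1 ≤ p.2 ∧ p.2 ≤ Vm ∧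
        Module.finrank ℂ p.1 = k - s ∧ Module.finrank ℂ p.2 = n - s} := by
    rintro W ⟨hWinv, hWiso, hWk, hWs⟩
    have hsplit := graded_of_invariant Vm Vp hV φ hφm hφp W hWinv
    have hdisj : (W ⊓ Vm) ⊓ (W ⊓ Vp) = ⊥ := by
      rw [eq_bot_iff]
      intro x hx
      have : x ∈ Vm ⊓ Vp := ⟨hx.1.2, hx.2.2⟩
      rwa [hV.inf_eq_bot] at this
    have hrksum : finrank ℂ (W ⊓ Vm : Submodule ℂ V) + s = k := by
      have h1 := Submodule.finrank_sup_add_finrank_inf_eq (W ⊓ Vm) (W ⊓ Vp)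
      rw [← hsplit, hdisj, finrank_bot, add_zero, hWk, hWs] at h1
      omega
    refine ⟨?_, inf_le_left, ?_, ?_⟩
    · intro v hv
      refine ⟨hv.2, (mem_orthAux B _ v).mpr fun w hw => hWiso v hv.1 w hw.1⟩
    · show finrank ℂ (W ⊓ Vm : Submodule ℂ V) = k - s
      omega
    · show finrank ℂ (Vm ⊓ ⨅ w ∈ W ⊓ Vp, LinearMap.ker (B.flip w) : Submodule ℂ V) = n - s
      rw [keyA (W ⊓ Vp) inf_le_right, hWs]
  -- backward mapsTo
  have hMapsG : Set.MapsTo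
      (fun p : Submodule ℂ V × Submodule ℂ V =>
        p.1 ⊔ (Vp ⊓ ⨅ v ∈ p.2, LinearMap.ker (B v)))
      {p : Submodule ℂ V × Submodule ℂ V | p.1 ≤ p.2 ∧ p.2 ≤ Vm ∧
        Module.finrank ℂ p.1 = k - s ∧ Module.finrank ℂ p.2 = n - s}
      {W : Submodule ℂ V | (∀ t : ℂˣ, W.map (φ t) ≤ W) ∧
        (∀ u ∈ W, ∀ u' ∈ W, B u u' = 0) ∧
        Module.finrank ℂ W = k ∧ Module.finrank ℂ (W ⊓ Vp : Submodule ℂ V) = s} := by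
    rintro ⟨W', A⟩ ⟨h12, h2m, hr1, hr2⟩
    simp only [Set.mem_setOf_eq] at h12 h2m hr1 hr2 ⊢
    set S : Submodule ℂ V := Vp ⊓ ⨅ v ∈ A, LinearMap.ker (B v) with hSdef
    have hSVp : S ≤ Vp := inf_le_left
    have hW'Vm : W' ≤ Vm := h12.trans h2m
    have hSrk : finrank ℂ S = s := by
      rw [hSdef, keyA' A h2m, hr2]
      omega
    have hWp_eq : (W' ⊔ S) ⊓ Vp = S := by
      rw [sup_comm]
      exact sup_inf_eq_left Vp Vm hV.symm S W' hSVp hW'Vm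
    refine ⟨?_, ?_, ?_, ?_⟩
    · intro t
      rw [Submodule.map_sup]
      apply sup_le
      · rintro x ⟨a, ha, rfl⟩
        rw [hφm t a (hW'Vm ha)]
        exact Submodule.mem_sup_left (W'.smul_mem _ ha)
      · rintro x ⟨b, hb, rfl⟩
        rw [hφp t b (hSVp hb)]
        exact Submodule.mem_sup_right hb
    · intro u hu u' hu'
      obtain ⟨a, ha, b, hb, rfl⟩ := Submodule.mem_sup.mp hu
      obtain ⟨a', ha', b', hb', rfl⟩ := Submodule.mem_sup.mp hu'
      have h1 : B a a' = 0 := hm a (hW'Vm ha) a' (hW'Vm ha')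
      have h2 : B b b' = 0 := hp b (hSVp hb) b' (hSVp hb')
      have h3 : B a b' = 0 := (mem_orthAux' B A b').mp hb'.2 a (h12 ha)
      have h4 : B b a' = 0 := hswap a' b ((mem_orthAux' B A b).mp hb.2 a' (h12 ha'))
      simp only [map_add, LinearMap.add_apply, h1, h2, h3, h4, add_zero, zero_add]
    · have hd : W' ⊓ S = ⊥ := by
        rw [eq_bot_iff]
        intro x hx
        have : x ∈ Vm ⊓ Vp := ⟨hW'Vm hx.1, hSVp hx.2⟩
        rwa [hV.inf_eq_bot] at this
      have h1 := Submodule.finrank_sup_add_finrank_inf_eq W' S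
      rw [hd, finrank_bot, add_zero, hr1, hSrk] at h1
      rw [h1]
      omega
    · rw [hWp_eq, hSrk]
  -- left inverse
  have hInvL : Set.LeftInvOn
      (fun p : Submodule ℂ V × Submodule ℂ V =>
        p.1 ⊔ (Vp ⊓ ⨅ v ∈ p.2, LinearMap.ker (B v)))
      (fun W : Submodule ℂ V =>
        (W ⊓ Vm, Vm ⊓ ⨅ w ∈ W ⊓ Vp, LinearMap.ker (B.flip w)))
      {W : Submodule ℂ V | (∀ t : ℂˣ, W.map (φ t) ≤ W) ∧
        (∀ u ∈ W, ∀ u' ∈ W, B u u' = 0) ∧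
        Module.finrank ℂ W = k ∧ Module.finrank ℂ (W ⊓ Vp : Submodule ℂ V) = s} := by
    rintro W ⟨hWinv, hWiso, hWk, hWs⟩
    simp only
    set A : Submodule ℂ V := Vm ⊓ ⨅ w ∈ W ⊓ Vp, LinearMap.ker (B.flip w) with hA
    have hAVm : A ≤ Vm := inf_le_left
    have hArk : finrank ℂ A = n - s := by
      rw [hA, keyA (W ⊓ Vp) inf_le_right, hWs]
    have hle : W ⊓ Vp ≤ Vp ⊓ ⨅ v ∈ A, LinearMap.ker (B v) := by
      intro w hw
      refine ⟨hw.2, (mem_orthAux' B A w).mpr fun v hv => ?_⟩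
      exact (mem_orthAux B (W ⊓ Vp) v).mp hv.2 w hw
    have heq : Vp ⊓ ⨅ v ∈ A, LinearMap.ker (B v) = W ⊓ Vp := by
      symm
      apply Submodule.eq_of_le_of_finrank_le hle
      rw [keyA' A hAVm, hArk, hWs]
      omega
    rw [heq]
    exact (graded_of_invariant Vm Vp hV φ hφm hφp W hWinv).symm
  -- right inverse
  have hInvR : Set.RightInvOn
      (fun p : Submodule ℂ V × Submodule ℂ V =>
        p.1 ⊔ (Vp ⊓ ⨅ v ∈ p.2, LinearMap.ker (B v)))
      (fun W : Submodule ℂ V =>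
        (W ⊓ Vm, Vm ⊓ ⨅ w ∈ W ⊓ Vp, LinearMap.ker (B.flip w)))
      {p : Submodule ℂ V × Submodule ℂ V | p.1 ≤ p.2 ∧ p.2 ≤ Vm ∧
        Module.finrank ℂ p.1 = k - s ∧ Module.finrank ℂ p.2 = n - s} := by
    rintro ⟨W', A⟩ ⟨h12, h2m, hr1, hr2⟩
    simp only [Set.mem_setOf_eq] at h12 h2m hr1 hr2
    simp only
    set S : Submodule ℂ V := Vp ⊓ ⨅ v ∈ A, LinearMap.ker (B v) with hSdef
    have hSVp : S ≤ Vp := inf_le_left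
    have hW'Vm : W' ≤ Vm := h12.trans h2m
    have hSrk : finrank ℂ S = s := by
      rw [hSdef, keyA' A h2m, hr2]
      omega
    have hWm_eq : (W' ⊔ S) ⊓ Vm = W' := sup_inf_eq_left Vm Vp hV W' S hW'Vm hSVp
    have hWp_eq : (W' ⊔ S) ⊓ Vp = S := by
      rw [sup_comm]
      exact sup_inf_eq_left Vp Vm hV.symm S W' hSVp hW'Vm
    have hle : A ≤ Vm ⊓ ⨅ w ∈ S, LinearMap.ker (B.flip w) := by
      intro v hv
      refine ⟨h2m hv, (mem_orthAux B S v).mpr fun w hw => ?_⟩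
      exact (mem_orthAux' B A w).mp hw.2 v hv
    have heq : Vm ⊓ ⨅ w ∈ S, LinearMap.ker (B.flip w) = A := by
      symm
      apply Submodule.eq_of_le_of_finrank_le hle
      rw [keyA S hSVp, hSrk, hr2]
    ext1
    · simpa using hWm_eq
    · show Vm ⊓ ⨅ w ∈ (W' ⊔ S) ⊓ Vp, LinearMap.ker (B.flip w) = A
      rw [hWp_eq, heq]
  exact ⟨Set.InvOn.bijOn ⟨hInvL, hInvR⟩ hMapsF hMapsG, hInvL, hInvR⟩
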